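/- In the data center model under the threshold policy d_θ (with threshold θ ∈ {1,...,m+1}, defined by d_{n,j} = 0 for j < θ and d_{n,j} = j for j ≥ θ), the stationary probabilities are: π(i,0) = ξ_{i,0}/b for i ≤ n with ξ_{i,0} = λ^i/(i!μ_1^i); π(n,j) = (λ^n/(n!μ_1^n))(λ/(nμ_1))^j / b for 1 ≤ j ≤ θ−1; and π(n,j) = (λ^n/(n!μ_1^n))(λ/(nμ_1))^{θ−1} λ^{j−θ+1}/Π_{i=θ}^j(nμ_1+iμ_2) / b for θ ≤ j ≤ m, where b is the sum of all these unnormalized terms. -/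

import Mathlib

open Finset

/-- Death rate of the data-center birth-death chain at state index `k`
(states `0..n` are `(k,0)`; states `n+1..n+m` are `(n, k-n)`). -/
noncomputable def dcDeath (n : ℕ) (μ1 μ2 : ℝ) (d : ℕ → ℕ) (k : ℕ) : ℝ :=
  if k ≤ n then (k : ℝ) * μ1
  else (n : ℝ) * μ1 + (min (d (k - n)) (k - n) : ℝ) * μ2

/-- Policy-dependent generator of the data-center birth-death chain. -/
noncomputable def dcGen (n m : ℕ) (lam μ1 μ2 : ℝ) (d : ℕ → ℕ) (k l : ℕ) : ℝ :=
  if l = k + 1 then lam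
  else if l + 1 = k then dcDeath n μ1 μ2 d k
  else if l = k then -((if k < n + m then lam else 0) + dcDeath n μ1 μ2 d k)
  else 0

/-- `π` is a stationary probability vector for the policy-`d` chain. -/
def dcStationary (n m : ℕ) (lam μ1 μ2 : ℝ) (d : ℕ → ℕ) (π : ℕ → ℝ) : Prop :=
  (∀ l ∈ Finset.range (n + m + 1),
    ∑ k ∈ Finset.range (n + m + 1), π k * dcGen n m lam μ1 μ2 d k l = 0) ∧
  (∑ k ∈ Finset.range (n + m + 1), π k = 1) ∧
  (∀ k ∈ Finset.range (n + m + 1), 0 ≤ π k)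

/-- Reward (profit rate) function of the data center at state index `k`. -/
noncomputable def dcReward (n m : ℕ) (lam μ1 μ2 R P1W P2W P2S C1 C21 C22 C3 C4 : ℝ)
    (d : ℕ → ℕ) (k : ℕ) : ℝ :=
  if k ≤ n then
    R * ((k : ℝ) * μ1) - ((n : ℝ) * P1W + (m : ℝ) * P2S) * C1 - (k : ℝ) * C21
  else
    R * ((n : ℝ) * μ1 + (min (k - n) (d (k - n)) : ℝ) * μ2)
      - ((n : ℝ) * P1W + (d (k - n) : ℝ) * P2W + ((m : ℝ) - (d (k - n) : ℝ)) * P2S) * C1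
      - ((n : ℝ) * C21 + ((k - n : ℕ) : ℝ) * C22)
      - (n : ℝ) * μ1 * C3
      - (if k - n = m then lam * C4 else 0)

/-- `g` solves the Poisson equation `B^{(d)} g = η e - f` for the policy-`d` chain. -/
def dcPoisson (n m : ℕ) (lam μ1 μ2 : ℝ) (d : ℕ → ℕ) (f : ℕ → ℝ) (η : ℝ)
    (g : ℕ → ℝ) : Prop :=
  ∀ k ∈ Finset.range (n + m + 1),
    ∑ l ∈ Finset.range (n + m + 1), dcGen n m lam μ1 μ2 d k l * g l = η - f k

/-- under the threshold policy `d_θ` (with `d_{n,j} = 0` for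
`j < θ` and `d_{n,j} = j` for `j ≥ θ`), the explicitly given vector is the
stationary distribution of the chain. -/
theorem stmt14 (n m : ℕ) (hn : 1 ≤ n) (hm : 1 ≤ m)
    (lam μ1 μ2 : ℝ) (hlam : 0 < lam) (hμ1 : 0 < μ1) (hμ2 : 0 < μ2)
    (θ : ℕ) (hθ1 : 1 ≤ θ) (hθ2 : θ ≤ m + 1)
    (xi0 : ℕ → ℝ) (hxi0 : ∀ i, xi0 i = lam ^ i / ((i.factorial : ℝ) * μ1 ^ i))
    (xin : ℕ → ℝ)
    (hxin : ∀ j, xin j =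
      if j < θ then
        lam ^ n / ((n.factorial : ℝ) * μ1 ^ n) * (lam / ((n : ℝ) * μ1)) ^ j
      else
        lam ^ n / ((n.factorial : ℝ) * μ1 ^ n) * (lam / ((n : ℝ) * μ1)) ^ (θ - 1)
          * (lam ^ (j - θ + 1) /
              ∏ i ∈ Finset.Icc θ j, ((n : ℝ) * μ1 + (i : ℝ) * μ2)))
    (b : ℝ)
    (hb : b = ∑ i ∈ Finset.range (n + 1), xi0 i + ∑ j ∈ Finset.Icc 1 m, xin j)
    (π : ℕ → ℝ)
    (hπ : ∀ k, π k = (if k ≤ n then xi0 k else xin (k - n)) / b) :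
    (∀ l ∈ Finset.range (n + m + 1),
      ∑ k ∈ Finset.range (n + m + 1),
        π k * dcGen n m lam μ1 μ2 (fun j => if j < θ then 0 else j) k l = 0) ∧
    ∑ k ∈ Finset.range (n + m + 1), π k = 1 := by
    classical
  have h0θ : 0 < θ := hθ1
  have hn1 : (1:ℝ) ≤ (n:ℝ) := by exact_mod_cast hn
  have hnμ1 : (0:ℝ) < (n:ℝ) * μ1 := by nlinarith
  have hxi0pos : ∀ i, 0 < xi0 i := by
    intro i
    rw [hxi0]
    have hf : (0:ℝ) < (i.factorial : ℝ) := by exact_mod_cast i.factorial_pos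
    positivity
  have hprodpos : ∀ j, 0 < ∏ i ∈ Finset.Icc θ j, ((n:ℝ) * μ1 + (i:ℝ) * μ2) := by
    intro j
    apply Finset.prod_pos
    intro i _
    have : (0:ℝ) ≤ (i:ℝ) * μ2 := by positivity
    linarith
  have hxinpos : ∀ j, 0 < xin j := by
    intro j
    rw [hxin]
    split_ifs
    · have hf : (0:ℝ) < (n.factorial : ℝ) := by exact_mod_cast n.factorial_pos
      positivity
    · have hf : (0:ℝ) < (n.factorial : ℝ) := by exact_mod_cast n.factorial_pos
      have := hprodpos j
      positivity
  have hbpos : 0 < b := by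
    rw [hb]
    have h1 : 0 < ∑ i ∈ Finset.range (n + 1), xi0 i :=
      Finset.sum_pos (fun i _ => hxi0pos i) (by simp)
    have h2 : 0 ≤ ∑ j ∈ Finset.Icc 1 m, xin j :=
      Finset.sum_nonneg (fun j _ => (hxinpos j).le)
    linarith
  set D : ℕ → ℝ := dcDeath n μ1 μ2 (fun j => if j < θ then 0 else j) with hD
  have hd1 : ∀ k, k ≤ n → D k = (k:ℝ) * μ1 := by
    intro k hk
    simp [hD, dcDeath, hk]
  have hd2 : ∀ j, 1 ≤ j → j < θ → D (n + j) = (n:ℝ) * μ1 := by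
    intro j h1 h2
    have hnot : ¬ (n + j ≤ n) := by omega
    simp [hD, dcDeath, hnot, h2]
  have hd3 : ∀ j, θ ≤ j → D (n + j) = (n:ℝ) * μ1 + (j:ℝ) * μ2 := by
    intro j h1
    have hnot : ¬ (n + j ≤ n) := by omega
    have h2 : ¬ (j < θ) := by omega
    simp [hD, dcDeath, hnot, h2]
  have hxin0 : xin 0 = xi0 n := by
    rw [hxin, hxi0, if_pos h0θ]
    ring
  have hE : ∀ k, n ≤ k → (if k ≤ n then xi0 k else xin (k - n)) = xin (k - n) := by
    intro k hk
    rcases eq_or_lt_of_le hk with h | h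
    · rw [if_pos (le_of_eq h.symm), ← h, Nat.sub_self, hxin0]
    · rw [if_neg (by omega)]
  -- detailed balance
  have hDB : ∀ k, k < n + m →
      (if k ≤ n then xi0 k else xin (k - n)) * lam =
      (if k + 1 ≤ n then xi0 (k + 1) else xin (k + 1 - n)) * D (k + 1) := by
    intro k hk
    rcases lt_or_ge k n with h | h
    · have hk1 : k + 1 ≤ n := h
      rw [if_pos (Nat.le_of_lt h), if_pos hk1, hd1 _ hk1, hxi0, hxi0]
      have hfac : (((k+1).factorial : ℕ) : ℝ) = ((k:ℝ) + 1) * (k.factorial : ℝ) := by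
        push_cast [Nat.factorial_succ]
        ring
      have hfk : ((k.factorial : ℕ) : ℝ) ≠ 0 := by
        have : (0:ℝ) < (k.factorial : ℝ) := by exact_mod_cast k.factorial_pos
        linarith
      have hμ1k : μ1 ^ k ≠ 0 := pow_ne_zero _ (ne_of_gt hμ1)
      rw [hfac]
      push_cast
      field_simp
      ring
    · set j := k - n with hj
      have hkj : k = n + j := by omega
      have hjm : j < m := by omega
      have e1 : (if k ≤ n then xi0 k else xin (k - n)) = xin j := by
        rw [hE k h]
      have e2 : (if k + 1 ≤ n then xi0 (k + 1) else xin (k + 1 - n)) = xin (j + 1) := by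
        rw [hE (k + 1) (by omega)]
        congr 1
        omega
      have e3 : k + 1 = n + (j + 1) := by omega
      rw [e1, e2, e3]
      by_cases hc : j + 1 < θ
      · rw [hd2 (j + 1) (by omega) hc, hxin j, hxin (j + 1), if_pos (by omega), if_pos hc]
        have hne : ((n:ℝ) * μ1) ≠ 0 := ne_of_gt hnμ1
        rw [pow_succ]
        field_simp
      · by_cases hc2 : j + 1 = θ
        · subst hc2
          rw [hd3 (j + 1) le_rfl, hxin j, hxin (j + 1), if_pos (by omega), if_neg (by omega)]
          rw [Finset.Icc_self, Finset.prod_singleton]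
          have hden : ((n:ℝ) * μ1 + ((j:ℝ) + 1) * μ2) ≠ 0 := by
            have : (0:ℝ) ≤ ((j:ℝ) + 1) * μ2 := by positivity
            nlinarith
          simp only [Nat.add_sub_cancel, Nat.sub_self]
          push_cast
          field_simp
        · have hθj : θ ≤ j := by omega
          rw [hd3 (j + 1) (by omega), hxin j, hxin (j + 1), if_neg (by omega), if_neg (by omega)]
          rw [Finset.prod_Icc_succ_top (by omega : θ ≤ j + 1)]
          have hexp : j + 1 - θ + 1 = (j - θ + 1) + 1 := by omega
          rw [hexp, pow_succ]
          have h1 : (∏ i ∈ Finset.Icc θ j, ((n:ℝ) * μ1 + (i:ℝ) * μ2)) ≠ 0 :=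
            ne_of_gt (hprodpos j)
          have h2 : ((n:ℝ) * μ1 + ((j:ℝ) + 1) * μ2) ≠ 0 := by
            have : (0:ℝ) ≤ ((j:ℝ) + 1) * μ2 := by positivity
            nlinarith
          push_cast
          field_simp
          ring
  have hπDB : ∀ k, k < n + m → π k * lam = π (k + 1) * D (k + 1) := by
    intro k hk
    rw [hπ k, hπ (k + 1), div_mul_eq_mul_div, div_mul_eq_mul_div, hDB k hk]
  have hgensplit : ∀ k l : ℕ,
      dcGen n m lam μ1 μ2 (fun j => if j < θ then 0 else j) k l =
      (if l = k + 1 then lam else 0) + (if l + 1 = k then D k else 0) +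
      (if l = k then -((if k < n + m then lam else 0) + D k) else 0) := by
    intro k l
    rw [hD]
    unfold dcGen
    split_ifs <;> first | (exfalso; omega) | ring1
  have hS1 : ∀ l' : ℕ, l' < n + m + 1 →
      (∑ k ∈ Finset.range (n + m + 1), if l' + 1 = k + 1 then π k * lam else 0) =
      π l' * lam := by
    intro l' hl'
    simp only [add_left_inj]
    rw [Finset.sum_ite_eq]
    simp [Finset.mem_range.mpr hl']
  constructor
  · intro l hl
    have hlN : l < n + m + 1 := Finset.mem_range.mp hl
    have hsum : ∑ k ∈ Finset.range (n + m + 1),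
        π k * dcGen n m lam μ1 μ2 (fun j => if j < θ then 0 else j) k l =
        (∑ k ∈ Finset.range (n + m + 1), if l = k + 1 then π k * lam else 0)
      + (∑ k ∈ Finset.range (n + m + 1), if l + 1 = k then π k * D k else 0)
      + (∑ k ∈ Finset.range (n + m + 1),
          if l = k then π k * (-((if k < n + m then lam else 0) + D k)) else 0) := by
      rw [← Finset.sum_add_distrib, ← Finset.sum_add_distrib]
      apply Finset.sum_congr rfl
      intro k _
      rw [hgensplit]
      simp only [mul_add, mul_ite, mul_zero]
    rw [hsum]
    have hS3 : (∑ k ∈ Finset.range (n + m + 1),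
        if l = k then π k * (-((if k < n + m then lam else 0) + D k)) else 0) =
        π l * (-((if l < n + m then lam else 0) + D l)) := by
      rw [Finset.sum_ite_eq]
      simp [hl]
    have hS2 : (∑ k ∈ Finset.range (n + m + 1), if l + 1 = k then π k * D k else 0) =
        if l + 1 ∈ Finset.range (n + m + 1) then π (l + 1) * D (l + 1) else 0 :=
      Finset.sum_ite_eq _ _ _
    rw [hS2, hS3]
    rcases Nat.eq_zero_or_pos l with hl0 | hlpos
    · subst hl0
      have h1 : (∑ k ∈ Finset.range (n + m + 1), if 0 = k + 1 then π k * lam else 0) = 0 := by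
        apply Finset.sum_eq_zero
        intro k _
        rw [if_neg (by omega)]
      have h2 : (0:ℕ) + 1 ∈ Finset.range (n + m + 1) := by
        simp
        omega
      rw [h1, if_pos h2, hd1 0 (by omega)]
      have h3 : (0:ℕ) < n + m := by omega
      rw [if_pos h3]
      have h4 := hπDB 0 h3
      push_cast
      linarith [h4]
    · obtain ⟨l', rfl⟩ : ∃ l', l = l' + 1 := ⟨l - 1, by omega⟩
      rw [hS1 l' (by omega)]
      by_cases htop : l' + 1 = n + m
      · have h2 : ¬ (l' + 1 + 1 ∈ Finset.range (n + m + 1)) := by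
          simp
          omega
        rw [if_neg h2, if_neg (by omega)]
        have h4 := hπDB l' (by omega)
        linarith [h4]
      · have h2 : l' + 1 + 1 ∈ Finset.range (n + m + 1) := by
          simp
          omega
        rw [if_pos h2, if_pos (by omega : l' + 1 < n + m)]
        have h4 := hπDB l' (by omega)
        have h5 := hπDB (l' + 1) (by omega)
        linarith [h4, h5]
  · have hEb : ∑ k ∈ Finset.range (n + m + 1),
        (if k ≤ n then xi0 k else xin (k - n)) = b := by
      rw [hb]
      have hsplit : n + m + 1 = (n + 1) + m := by omega
      rw [hsplit, Finset.sum_range_add]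
      congr 1
      · apply Finset.sum_congr rfl
        intro i hi
        have hi' : i < n + 1 := Finset.mem_range.mp hi
        rw [if_pos (by omega : i ≤ n)]
      · rw [← Finset.Ico_add_one_right_eq_Icc, Finset.sum_Ico_eq_sum_range]
        simp only [Nat.add_sub_cancel, Nat.succ_sub_one]
        apply Finset.sum_congr rfl
        intro i _
        rw [if_neg (by omega)]
        congr 1
        omega
    simp only [hπ]
    rw [← Finset.sum_div, hEb, div_self (ne_of_gt hbpos)]
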